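/- Fix b ∈ [p,q]. Then there exists c_0 ∈ ℝ such that for every c ≥ c_0 the function B(λ) = c − ∫_0^1 A'(t(λ−b)+b) dt (which equals c − (A(λ)−A(b))/(λ−b) for λ ∈ [p,q], λ ≠ b) satisfies B(λ) > 0 for all λ ∈ [p,q] and (−1)^{k−1} B^{(k)}(λ) > 0 for all λ ∈ [p,q] and 1 ≤ k ≤ N−1. (Thus subtracting a divided difference of A from a large constant produces a function satisfying the monotonicity condition with N replaced by N−1.) -/

import Mathlib

open Set MeasureTheory Metric Filter Topology intervalIntegral

private lemma itd_open {s : Set ℝ} (hs : IsOpen s) {f : ℝ → ℝ} {x : ℝ} (hx : x ∈ s) (n : ℕ) :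
    iteratedDerivWithin n f s x = iteratedDeriv n f x := by
  rw [iteratedDerivWithin_eq_iteratedFDerivWithin, iteratedDeriv_eq_iteratedFDeriv,
    iteratedFDerivWithin_of_isOpen n hs hx]

private lemma key_deriv {s : Set ℝ} (hs : IsOpen s) (hconv : Convex ℝ s)
    {g g' : ℝ → ℝ} (hg'c : ContinuousOn g' s)
    (hg : ∀ y ∈ s, HasDerivAt g (g' y) y) {b : ℝ} (hbs : b ∈ s) (j : ℕ)
    {x : ℝ} (hx : x ∈ s) :
    HasDerivAt (fun y => ∫ t in (0:ℝ)..1, t ^ j * g (t * (y - b) + b))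
      (∫ t in (0:ℝ)..1, t ^ (j + 1) * g' (t * (x - b) + b)) x := by
  have hgc : ContinuousOn g s := fun y hy =>
    ((hg y hy).differentiableAt.continuousAt).continuousWithinAt
  obtain ⟨ε, εpos, hball⟩ : ∃ ε > 0, closedBall x ε ⊆ s :=
    Metric.nhds_basis_closedBall.mem_iff.1 (hs.mem_nhds hx)
  have hmem : ∀ t ∈ Icc (0:ℝ) 1, ∀ y ∈ closedBall x ε, t * (y - b) + b ∈ s := by
    intro t ht y hy
    have h : t * (y - b) + b = (1 - t) • b + t • y := by simp [smul_eq_mul]; ring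
    rw [h]
    exact hconv hbs (hball hy) (by linarith [ht.2]) ht.1 (by ring)
  -- compact set of relevant points
  set K : Set ℝ := (fun p : ℝ × ℝ => p.1 * (p.2 - b) + b) '' (Icc (0:ℝ) 1 ×ˢ closedBall x ε)
    with hK
  have hKc : IsCompact K :=
    (isCompact_Icc.prod (isCompact_closedBall x ε)).image (by fun_prop)
  have hKs : K ⊆ s := by
    rintro z ⟨⟨t, y⟩, ⟨ht, hy⟩, rfl⟩
    exact hmem t ht y hy
  obtain ⟨C, hC⟩ := hKc.exists_bound_of_continuousOn (hg'c.mono hKs)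
  have hball' : ball x ε ⊆ closedBall x ε := ball_subset_closedBall
  have hIoc : Set.uIoc (0:ℝ) 1 = Ioc (0:ℝ) 1 := uIoc_of_le zero_le_one
  have hIcc : uIcc (0:ℝ) 1 = Icc (0:ℝ) 1 := uIcc_of_le zero_le_one
  have haffc : ∀ y : ℝ, Continuous (fun t : ℝ => t * (y - b) + b) := by
    intro y; fun_prop
  have contF : ∀ y ∈ closedBall x ε,
      ContinuousOn (fun t : ℝ => t ^ j * g (t * (y - b) + b)) (Icc (0:ℝ) 1) := by
    intro y hy
    exact ((continuous_pow j).continuousOn).mul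
      (hgc.comp ((haffc y).continuousOn) (fun t ht => hmem t ht y hy))
  have contF' : ∀ y ∈ closedBall x ε,
      ContinuousOn (fun t : ℝ => t ^ (j + 1) * g' (t * (y - b) + b)) (Icc (0:ℝ) 1) := by
    intro y hy
    exact ((continuous_pow (j + 1)).continuousOn).mul
      (hg'c.comp ((haffc y).continuousOn) (fun t ht => hmem t ht y hy))
  have main := (intervalIntegral.hasDerivAt_integral_of_dominated_loc_of_deriv_le
    (F := fun y t => t ^ j * g (t * (y - b) + b))
    (F' := fun y t => t ^ (j + 1) * g' (t * (y - b) + b))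
    (bound := fun _ => C) (μ := volume) (a := (0:ℝ)) (b := 1) (x₀ := x) (s := ball x ε) (ball_mem_nhds x εpos)
    ?_ ?_ ?_ ?_ ?_ ?_)
  · exact main.2
  · -- hF_meas
    filter_upwards [closedBall_mem_nhds x εpos] with y hy
    exact ((contF y hy).mono (by rw [hIoc]; exact Ioc_subset_Icc_self)).aestronglyMeasurable
      (by rw [hIoc]; exact measurableSet_Ioc)
  · -- hF_int
    exact ((contF x (mem_closedBall_self εpos.le)).mono (by rw [hIcc])).intervalIntegrable
  · -- hF'_meas
    exact ((contF' x (mem_closedBall_self εpos.le)).mono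
      (by rw [hIoc]; exact Ioc_subset_Icc_self)).aestronglyMeasurable
      (by rw [hIoc]; exact measurableSet_Ioc)
  · -- h_bound
    refine Filter.Eventually.of_forall (fun t ht y hy => ?_)
    rw [hIoc] at ht
    have ht' : t ∈ Icc (0:ℝ) 1 := Ioc_subset_Icc_self ht
    have h1 : ‖t ^ (j + 1)‖ ≤ 1 := by
      rw [Real.norm_eq_abs, abs_pow]
      exact pow_le_one₀ (abs_nonneg t) (abs_le.2 ⟨by linarith [ht'.1], ht'.2⟩)
    have h2 : ‖g' (t * (y - b) + b)‖ ≤ C :=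
      hC _ ⟨(t, y), ⟨ht', hball' hy⟩, rfl⟩
    calc ‖t ^ (j + 1) * g' (t * (y - b) + b)‖
        = ‖t ^ (j + 1)‖ * ‖g' (t * (y - b) + b)‖ := norm_mul _ _
      _ ≤ 1 * C := mul_le_mul h1 h2 (norm_nonneg _) zero_le_one
      _ = C := one_mul C
  · -- bound integrable
    exact intervalIntegrable_const
  · -- h_diff
    refine Filter.Eventually.of_forall (fun t ht y hy => ?_)
    rw [hIoc] at ht
    have ht' : t ∈ Icc (0:ℝ) 1 := Ioc_subset_Icc_self ht
    have haff : HasDerivAt (fun y : ℝ => t * (y - b) + b) t y := by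
      simpa using (((hasDerivAt_id y).sub_const b).const_mul t).add_const b
    have hcomp := (hg _ (hmem t ht' y (hball' hy))).comp y haff
    have := hcomp.const_mul (t ^ j)
    exact this.congr_deriv (by ring)

private noncomputable def Gfun (A : ℝ → ℝ) (b : ℝ) (j : ℕ) (x : ℝ) : ℝ :=
  ∫ t in (0:ℝ)..1, t ^ j * iteratedDeriv (j + 1) A (t * (x - b) + b)



/-- used in §§8–9.  Subtracting a divided difference of `A` from a
sufficiently large constant produces a function satisfying the monotonicity condition
with `N` replaced by `N−1`: there is `c₀` such that for every `c ≥ c₀` the function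
`B(λ) = c − ∫_0^1 A'(t(λ−b)+b) dt` (which equals `c − (A(λ)−A(b))/(λ−b)` for
`λ ≠ b`) is positive on `[p,q]` and satisfies `(−1)^{k−1} B^{(k)} > 0` on `[p,q]`
for `1 ≤ k ≤ N−1`. -/
theorem stmt_18 (N : ℕ) (hN : 2 ≤ N) (p q : ℝ) (hpq : p < q)
    (A : ℝ → ℝ) (u v : ℝ) (hu : u < p) (hv : q < v)
    (hA : ContDiffOn ℝ (↑N) A (Set.Ioo u v))
    (hApos : ∀ x ∈ Set.Icc p q, 0 < A x)
    (hAd : ∀ k, 1 ≤ k → k ≤ N → ∀ x ∈ Set.Icc p q,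
      0 < (-1 : ℝ) ^ (k - 1) * iteratedDeriv k A x)
    (b : ℝ) (hb : b ∈ Set.Icc p q) :
    ∃ c₀ : ℝ, ∀ c : ℝ, c₀ ≤ c →
      (∀ x ∈ Set.Icc p q, x ≠ b →
        c - (∫ t in (0:ℝ)..1, deriv A (t * (x - b) + b)) = c - (A x - A b) / (x - b)) ∧
      (∀ x ∈ Set.Icc p q, 0 < c - ∫ t in (0:ℝ)..1, deriv A (t * (x - b) + b)) ∧
      (∀ k, 1 ≤ k → k ≤ N - 1 → ∀ x ∈ Set.Icc p q,
        0 < (-1 : ℝ) ^ (k - 1) *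
          iteratedDeriv k (fun y => c - ∫ t in (0:ℝ)..1, deriv A (t * (y - b) + b)) x) := by
  set s : Set ℝ := Set.Ioo u v with hs_def
  have hsub : Icc p q ⊆ s := fun z hz => ⟨lt_of_lt_of_le hu hz.1, lt_of_le_of_lt hz.2 hv⟩
  have hso : IsOpen s := isOpen_Ioo
  have hsc : Convex ℝ s := convex_Ioo u v
  have hbs : b ∈ s := hsub hb
  have hcont : ∀ m : ℕ, m ≤ N → ContinuousOn (iteratedDeriv m A) s := by
    intro m hm
    exact (hA.continuousOn_iteratedDerivWithin (by exact_mod_cast hm) hso.uniqueDiffOn).congr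
      (fun z hz => (itd_open hso hz m).symm)
  have hder : ∀ m : ℕ, m < N → ∀ z ∈ s, HasDerivAt (iteratedDeriv m A)
      (iteratedDeriv (m + 1) A z) z := by
    intro m hm z hz
    have h1 : DifferentiableWithinAt ℝ (iteratedDerivWithin m A s) s z :=
      hA.differentiableOn_iteratedDerivWithin (by exact_mod_cast hm) hso.uniqueDiffOn z hz
    have heq : iteratedDerivWithin m A s =ᶠ[𝓝 z] iteratedDeriv m A := by
      filter_upwards [hso.mem_nhds hz] with w hw using itd_open hso hw m
    have h3 : DifferentiableAt ℝ (iteratedDeriv m A) z :=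
      (h1.differentiableAt (hso.mem_nhds hz)).congr_of_eventuallyEq heq.symm
    rw [iteratedDeriv_succ]
    exact h3.hasDerivAt
  have hmap : ∀ x ∈ Icc p q, ∀ t ∈ Icc (0:ℝ) 1, t * (x - b) + b ∈ Icc p q := by
    intro x hx t ht
    constructor
    · nlinarith [mul_nonneg ht.1 (sub_nonneg.2 hx.1), mul_nonneg (sub_nonneg.2 ht.2)
        (sub_nonneg.2 hb.1), hb.1]
    · nlinarith [mul_nonneg ht.1 (sub_nonneg.2 hx.2),
        mul_nonneg (sub_nonneg.2 ht.2) (sub_nonneg.2 hb.2), hb.2]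
  have hGd : ∀ j : ℕ, j + 2 ≤ N → ∀ z ∈ s, HasDerivAt (Gfun A b j) (Gfun A b (j + 1) z) z := by
    intro j hj z hz
    unfold Gfun
    exact key_deriv hso hsc (hcont (j + 2) hj)
      (fun y hy => hder (j + 1) (by omega) y hy) hbs j hz
  have hiter : ∀ m j : ℕ, j + m + 1 ≤ N → ∀ z ∈ s,
      iteratedDeriv m (Gfun A b j) z = Gfun A b (j + m) z := by
    intro m
    induction m with
    | zero => intro j hj z hz; simp
    | succ m ih =>
      intro j hj z hz
      have heq : deriv (Gfun A b j) =ᶠ[𝓝 z] Gfun A b (j + 1) := by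
        filter_upwards [hso.mem_nhds hz] with w hw using (hGd j (by omega) w hw).deriv
      calc iteratedDeriv (m + 1) (Gfun A b j) z
          = iteratedDeriv m (deriv (Gfun A b j)) z := by rw [iteratedDeriv_succ']
        _ = iteratedDeriv m (Gfun A b (j + 1)) z := heq.iteratedDeriv_eq m
        _ = Gfun A b (j + 1 + m) z := ih (j + 1) (by omega) z hz
        _ = Gfun A b (j + (m + 1)) z := by congr 1; omega
  have hGsign : ∀ k : ℕ, 1 ≤ k → k + 1 ≤ N → ∀ x ∈ Icc p q,
      0 < (-1 : ℝ) ^ k * Gfun A b k x := by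
    intro k hk1 hkN x hx
    have h1 : (-1 : ℝ) ^ k * Gfun A b k x
        = ∫ t in (0:ℝ)..1, (-1 : ℝ) ^ k * (t ^ k * iteratedDeriv (k + 1) A (t * (x - b) + b)) := by
      unfold Gfun; rw [intervalIntegral.integral_const_mul]
    rw [h1]
    have hci : ContinuousOn
        (fun t : ℝ => (-1 : ℝ) ^ k * (t ^ k * iteratedDeriv (k + 1) A (t * (x - b) + b)))
        (Icc (0:ℝ) 1) := by
      refine continuousOn_const.mul (((continuous_pow k).continuousOn).mul
        ((hcont (k + 1) hkN).comp (by fun_prop) (fun t ht => hsub (hmap x hx t ht))))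
    apply intervalIntegral.intervalIntegral_pos_of_pos_on
    · exact (hci.mono (by rw [Set.uIcc_of_le (zero_le_one : (0:ℝ) ≤ 1)])).intervalIntegrable
    · intro t ht
      have hpt : t * (x - b) + b ∈ Icc p q := hmap x hx t (Ioo_subset_Icc_self ht)
      have hpos := hAd (k + 1) (by omega) (by omega) _ hpt
      rw [Nat.add_sub_cancel] at hpos
      have : (-1 : ℝ) ^ k * (t ^ k * iteratedDeriv (k + 1) A (t * (x - b) + b))
          = t ^ k * ((-1 : ℝ) ^ k * iteratedDeriv (k + 1) A (t * (x - b) + b)) := by ring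
      rw [this]
      exact mul_pos (pow_pos ht.1 k) hpos
    · exact zero_lt_one
  have hG0cont : ContinuousOn (Gfun A b 0) (Icc p q) := fun x hx =>
    ((hGd 0 (by omega) x (hsub hx)).continuousAt).continuousWithinAt
  obtain ⟨C, hC⟩ := isCompact_Icc.exists_bound_of_continuousOn hG0cont
  have hB0 : ∀ x : ℝ, (∫ t in (0:ℝ)..1, deriv A (t * (x - b) + b)) = Gfun A b 0 x := by
    intro x
    unfold Gfun
    simp [iteratedDeriv_one]
  refine ⟨C + 1, fun c hc => ⟨?_, ?_, ?_⟩⟩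
  · -- divided difference
    intro x hx hxb
    congr 1
    have hxbne : x - b ≠ 0 := sub_ne_zero.2 hxb
    have key : ∀ t ∈ uIcc (0:ℝ) 1,
        HasDerivAt (fun t : ℝ => A (t * (x - b) + b) / (x - b))
          (deriv A (t * (x - b) + b)) t := by
      intro t ht
      rw [uIcc_of_le zero_le_one] at ht
      have hpt : t * (x - b) + b ∈ s := hsub (hmap x hx t ht)
      have hA1 : HasDerivAt A (deriv A (t * (x - b) + b)) (t * (x - b) + b) := by
        have := hder 0 (by omega) _ hpt
        simpa [iteratedDeriv_one] using this
      have haff : HasDerivAt (fun t : ℝ => t * (x - b) + b) (x - b) t := by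
        simpa using ((hasDerivAt_id t).mul_const (x - b)).add_const b
      have := (hA1.comp t haff).div_const (x - b)
      exact this.congr_deriv (mul_div_cancel_right₀ _ hxbne)
    have hint : IntervalIntegrable (fun t : ℝ => deriv A (t * (x - b) + b)) volume 0 1 := by
      have : ContinuousOn (fun t : ℝ => deriv A (t * (x - b) + b)) (Icc (0:ℝ) 1) := by
        have hd : ContinuousOn (deriv A) s := by
          have := hcont 1 (by omega)
          rwa [iteratedDeriv_one] at this
        exact hd.comp (by fun_prop) (fun t ht => hsub (hmap x hx t ht))
      exact (this.mono (by rw [Set.uIcc_of_le (zero_le_one : (0:ℝ) ≤ 1)])).intervalIntegrable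
    rw [intervalIntegral.integral_eq_sub_of_hasDerivAt key hint]
    rw [show (1:ℝ) * (x - b) + b = x by ring, show (0:ℝ) * (x - b) + b = b by ring]
    rw [div_sub_div_same]
  · -- positivity
    intro x hx
    rw [hB0 x]
    have h1 : Gfun A b 0 x ≤ C := le_trans (le_abs_self _) (hC x hx)
    linarith
  · -- derivative signs
    intro k hk1 hkN x hx
    obtain ⟨m, rfl⟩ : ∃ m, k = m + 1 := ⟨k - 1, by omega⟩
    have hz : x ∈ s := hsub hx
    have hfun : (fun y => c - ∫ t in (0:ℝ)..1, deriv A (t * (y - b) + b))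
        = fun y => c - Gfun A b 0 y := by
      funext y; rw [hB0 y]
    rw [hfun]
    have heq : deriv (fun y => c - Gfun A b 0 y) =ᶠ[𝓝 x] fun y => -(Gfun A b 1 y) := by
      filter_upwards [hso.mem_nhds hz] with w hw using ((hGd 0 (by omega) w hw).const_sub c).deriv
    have h2 : iteratedDeriv (m + 1) (fun y => c - Gfun A b 0 y) x = -(Gfun A b (1 + m) x) := by
      calc iteratedDeriv (m + 1) (fun y => c - Gfun A b 0 y) x
          = iteratedDeriv m (deriv (fun y => c - Gfun A b 0 y)) x := by rw [iteratedDeriv_succ']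
        _ = iteratedDeriv m (fun y => -(Gfun A b 1 y)) x := heq.iteratedDeriv_eq m
        _ = -(iteratedDeriv m (Gfun A b 1) x) := iteratedDeriv_neg m _ x
        _ = -(Gfun A b (1 + m) x) := by rw [hiter m 1 (by omega) x hz]
    rw [h2, show 1 + m = m + 1 by omega, Nat.add_sub_cancel]
    have hsign := hGsign (m + 1) (by omega) (by omega) x hx
    convert hsign using 1
    ring
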